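/- If w is a nonnegative locally integrable function on the real line and 0 < δ < 1, then (M⁻f)^δ belongs to the one-sided Muckenhoupt class A₁⁺ for every locally integrable f with M⁻f finite a.e., with A₁⁺-constant at most C/(1−δ) for an absolute constant C. -/

import Mathlib

open MeasureTheory Set Filter FourierTransform ENNReal NNReal

noncomputable section

/-- One-sided (left) Hardy–Littlewood maximal operator. -/
def Mminus (f : ℝ → ℝ) (x : ℝ) : ℝ≥0∞ :=
  ⨆ (h : ℝ) (_ : 0 < h),
    (∫⁻ t in Set.Ioc (x - h) x, ENNReal.ofReal |f t|) / ENNReal.ofReal h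

/-- One-sided (right) Hardy–Littlewood maximal operator. -/
def Mplus (f : ℝ → ℝ) (x : ℝ) : ℝ≥0∞ :=
  ⨆ (h : ℝ) (_ : 0 < h),
    (∫⁻ t in Set.Ioc x (x + h), ENNReal.ofReal |f t|) / ENNReal.ofReal h

/-- One-sided (left) maximal operator with exponent `r`. -/
def MminusR (r : ℝ) (f : ℝ → ℝ) (x : ℝ) : ℝ≥0∞ :=
  ⨆ (h : ℝ) (_ : 0 < h),
    ((∫⁻ t in Set.Ioc (x - h) x, ENNReal.ofReal (|f t| ^ r)) / ENNReal.ofReal h) ^ (1 / r)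

/-- `w ∈ A₁⁺` with constant `C` : `M⁻w ≤ C w` a.e. -/
def A1PlusWith (w : ℝ → ℝ) (C : ℝ) : Prop :=
  ∀ᵐ x : ℝ, Mminus w x ≤ ENNReal.ofReal (C * w x)

/-- `w ∈ A₁⁻` with constant `C` : `M⁺w ≤ C w` a.e. -/
def A1MinusWith (w : ℝ → ℝ) (C : ℝ) : Prop :=
  ∀ᵐ x : ℝ, Mplus w x ≤ ENNReal.ofReal (C * w x)

/-- `w ∈ A_p⁺` with constant `C`, for `1 < p`. -/
def ApPlusWith (p : ℝ) (w : ℝ → ℝ) (C : ℝ) : Prop :=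
  ∀ a x b : ℝ, a < x → x < b →
    (∫ t in Set.Ioo a x, w t) *
      (∫ t in Set.Ioo x b, (w t) ^ (-1 / (p - 1))) ^ (p - 1) ≤ C * (b - a) ^ p

/-- `w ∈ A_p⁻` with constant `C`, for `1 < p`. -/
def ApMinusWith (p : ℝ) (w : ℝ → ℝ) (C : ℝ) : Prop :=
  ∀ a x b : ℝ, a < x → x < b →
    (∫ t in Set.Ioo x b, w t) *
      (∫ t in Set.Ioo a x, (w t) ^ (-1 / (p - 1))) ^ (p - 1) ≤ C * (b - a) ^ p

/-- A Calderón–Zygmund kernel on `ℝ` with support in the set `S` and constants `c₁ c₂ c₃`. -/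
def IsOneSidedCZKernel (K : ℝ → ℝ) (S : Set ℝ) (c₁ c₂ c₃ : ℝ) : Prop :=
  MeasureTheory.LocallyIntegrableOn K {x : ℝ | x ≠ 0} volume ∧
  Function.support K ⊆ S ∧
  (∀ ξ : ℝ, ‖𝓕 (fun x : ℝ => (K x : ℂ)) ξ‖ ≤ c₁) ∧
  (∀ x : ℝ, x ≠ 0 → |K x| ≤ c₂ / |x|) ∧
  (∀ x y : ℝ, |y| < |x| / 2 → |K x - K (x - y)| ≤ c₃ * |y| / x ^ 2)

/-- `T⁺` : one-sided singular integral with kernel supported in `(-∞,0)`. -/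
def Tplus (K : ℝ → ℝ) (f : ℝ → ℝ) (x : ℝ) : ℝ :=
  limUnder (nhdsWithin (0:ℝ) (Set.Ioi 0)) fun ε => ∫ y in Set.Ioi (x + ε), K (x - y) * f y

/-- `T⁻` : one-sided singular integral with kernel supported in `(0,∞)`. -/
def Tminus (K : ℝ → ℝ) (f : ℝ → ℝ) (x : ℝ) : ℝ :=
  limUnder (nhdsWithin (0:ℝ) (Set.Ioi 0)) fun ε => ∫ y in Set.Iic (x - ε), K (x - y) * f y

/-- Maximal truncated operator associated to the kernel `K`. -/
def Tstar (K : ℝ → ℝ) (f : ℝ → ℝ) (x : ℝ) : ℝ≥0∞ :=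
  ⨆ (ε : ℝ) (_ : 0 < ε),
    ∫⁻ y in {y : ℝ | ε < |x - y|}, ENNReal.ofReal (|K (x - y)| * |f y|)

/-- Weighted `L^p` norm `‖g‖_{L^p(w)}`. -/
def wLpNorm (p : ℝ) (w g : ℝ → ℝ) : ℝ≥0∞ :=
  (∫⁻ x : ℝ, ENNReal.ofReal (|g x| ^ p * w x)) ^ (1 / p)

/-- Weighted measure `w(E) = ∫_E w`. -/
def wMeasure (w : ℝ → ℝ) (E : Set ℝ) : ℝ≥0∞ :=
  ∫⁻ x in E, ENNReal.ofReal (w x)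



section CRhelpers
open Metric

lemma term_le_Mminus (f : ℝ → ℝ) (x : ℝ) {s : ℝ} (hs : 0 < s) :
    (∫⁻ t in Set.Ioc (x - s) x, ENNReal.ofReal |f t|) / ENNReal.ofReal s ≤ Mminus f x :=
  le_iSup₂ (f := fun (h : ℝ) (_ : 0 < h) =>
    (∫⁻ t in Set.Ioc (x - h) x, ENNReal.ofReal |f t|) / ENNReal.ofReal h) s hs

lemma setLintegral_le_Mminus_mul (f : ℝ → ℝ) (x : ℝ) {s : ℝ} (hs : 0 < s) :
    (∫⁻ t in Set.Ioc (x - s) x, ENNReal.ofReal |f t|) ≤ Mminus f x * ENNReal.ofReal s := by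
  have h := term_le_Mminus f x hs
  rwa [ENNReal.div_le_iff (by simp [hs, hs.not_ge]) (by simp)] at h

lemma weak_type (g : ℝ → ℝ) (l : ℝ≥0∞) (hl : l ≠ 0) :
    l * volume {t : ℝ | l < Mminus g t} ≤ 8 * ∫⁻ t, ENNReal.ofReal |g t| := by
  set N := ∫⁻ t, ENNReal.ofReal |g t| with hN
  by_cases hNt : N = ⊤
  · rw [hNt, ENNReal.mul_top (by norm_num)]; exact le_top
  by_cases hlt : l = ⊤
  · have : {t : ℝ | l < Mminus g t} = ∅ := by
      ext t; simp [hlt]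
    simp [this]
  set E := {t : ℝ | l < Mminus g t} with hE
  set R := (N / l).toReal with hR
  have key : ∀ t ∈ E, ∃ s : ℝ, 0 < s ∧ s ≤ R ∧
      l * ENNReal.ofReal s ≤ ∫⁻ y in Set.Ioc (t - s) t, ENNReal.ofReal |g y| := by
    intro t ht
    rw [hE, Set.mem_setOf_eq, Mminus, lt_iSup_iff] at ht
    obtain ⟨s, hs⟩ := ht
    rw [lt_iSup_iff] at hs
    obtain ⟨hs0, hlt'⟩ := hs
    have hint : l * ENNReal.ofReal s <
        ∫⁻ y in Set.Ioc (t - s) t, ENNReal.ofReal |g y| := by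
      rw [← ENNReal.lt_div_iff_mul_lt (Or.inl (by simp [hs0, hs0.not_ge])) (Or.inl (by simp))]
      exact hlt'
    have hsle : s ≤ R := by
      have h1 : ENNReal.ofReal s < N / l := by
        rw [ENNReal.lt_div_iff_mul_lt (Or.inl hl) (Or.inl hlt)]
        calc ENNReal.ofReal s * l = l * ENNReal.ofReal s := mul_comm _ _
          _ < ∫⁻ y in Set.Ioc (t - s) t, ENNReal.ofReal |g y| := hint
          _ ≤ N := setLIntegral_le_lintegral _ _
      have h2 : N / l ≠ ⊤ := (ENNReal.div_lt_top hNt hl).ne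
      calc s = (ENNReal.ofReal s).toReal := by rw [ENNReal.toReal_ofReal hs0.le]
        _ ≤ R := ENNReal.toReal_mono h2 h1.le
    exact ⟨s, hs0, hsle, hint.le⟩
  choose! r hr0 hrR hrint using key
  obtain ⟨u, huE, hdisj, hcov⟩ :=
    Vitali.exists_disjoint_subfamily_covering_enlargement_closedBall E id r R
      (fun a ha => hrR a ha) 4 (by norm_num)
  simp only [id] at hdisj hcov
  have hcnt : u.Countable := by
    refine hdisj.countable_of_nonempty_interior fun b hb => ?_
    exact (nonempty_ball.2 (hr0 b (huE hb))).mono ball_subset_interior_closedBall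
  have hEcov : E ⊆ ⋃ b ∈ u, closedBall b (4 * r b) := by
    intro t ht
    obtain ⟨b, hb, hsub⟩ := hcov t ht
    exact Set.mem_biUnion hb (hsub (mem_closedBall_self (hr0 t ht).le))
  have hIoc : ∀ b : ℝ, Set.Ioc (b - r b) b ⊆ closedBall b (r b) := by
    intro b y hy
    rw [mem_closedBall, Real.dist_eq, abs_le]
    constructor <;> linarith [hy.1, hy.2]
  have hdisj' : u.PairwiseDisjoint fun b => Set.Ioc (b - r b) b :=
    hdisj.mono_on fun b _ => hIoc b
  calc l * volume E ≤ l * ∑' b : u, volume (closedBall (b : ℝ) (4 * r b)) := by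
        gcongr
        exact (measure_mono hEcov).trans (measure_biUnion_le volume hcnt _)
    _ = ∑' b : u, l * ENNReal.ofReal (2 * (4 * r (b : ℝ))) := by
        rw [← ENNReal.tsum_mul_left]
        congr 1; funext b; rw [Real.volume_closedBall]
    _ ≤ ∑' b : u, 8 * (l * ENNReal.ofReal (r (b : ℝ))) := by
        refine ENNReal.tsum_le_tsum fun b => ?_
        have : ENNReal.ofReal (2 * (4 * r (b : ℝ))) = 8 * ENNReal.ofReal (r (b : ℝ)) := by
          rw [show (2 : ℝ) * (4 * r (b : ℝ)) = 8 * r (b : ℝ) by ring,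
            ENNReal.ofReal_mul (by norm_num : (0:ℝ) ≤ 8)]
          norm_num
        rw [this]; ring_nf; exact le_rfl
    _ ≤ ∑' b : u, 8 * ∫⁻ y in Set.Ioc ((b : ℝ) - r (b : ℝ)) (b : ℝ), ENNReal.ofReal |g y| := by
        refine ENNReal.tsum_le_tsum fun b => ?_
        gcongr
        exact hrint b (huE b.2)
    _ = 8 * ∑' b : u, ∫⁻ y in Set.Ioc ((b : ℝ) - r (b : ℝ)) (b : ℝ), ENNReal.ofReal |g y| :=
        ENNReal.tsum_mul_left
    _ ≤ 8 * N := by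
        gcongr
        rw [← lintegral_biUnion hcnt (fun b _ => measurableSet_Ioc) hdisj']
        exact setLIntegral_le_lintegral _ _

lemma Mminus_eq_rat_sup (g : ℝ → ℝ) (x : ℝ) :
    Mminus g x = ⨆ (q : ℚ) (_ : 0 < (q:ℝ)),
      (∫⁻ t in Set.Ioc (x - q) x, ENNReal.ofReal |g t|) / ENNReal.ofReal q := by
  apply le_antisymm
  · refine iSup₂_le fun h hh => ?_
    refine ENNReal.le_of_forall_lt_one_mul_le fun a ha => ?_
    by_cases ha0 : a = 0
    · simp [ha0]
    have hat : a ≠ ⊤ := ha.ne_top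
    set α := a.toReal with hα
    have hα0 : 0 < α := ENNReal.toReal_pos ha0 hat
    have hα1 : α < 1 := by
      rw [hα, ← ENNReal.toReal_one]
      exact ENNReal.toReal_strict_mono (by simp) ha
    have haeq : a = ENNReal.ofReal α := (ENNReal.ofReal_toReal hat).symm
    have hhα : h < h / α := by
      rw [lt_div_iff₀ hα0]; nlinarith
    obtain ⟨q, hq1, hq2⟩ := exists_rat_btwn hhα
    have hq0 : 0 < (q:ℝ) := hh.trans hq1
    have hmono : (∫⁻ t in Set.Ioc (x - h) x, ENNReal.ofReal |g t|)
        ≤ ∫⁻ t in Set.Ioc (x - q) x, ENNReal.ofReal |g t| :=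
      lintegral_mono_set (Set.Ioc_subset_Ioc_left (by linarith))
    have hfrac : ENNReal.ofReal α / ENNReal.ofReal h ≤ (ENNReal.ofReal (q:ℝ))⁻¹ := by
      rw [← ENNReal.ofReal_div_of_pos hh, ← ENNReal.ofReal_inv_of_pos hq0]
      apply ENNReal.ofReal_le_ofReal
      rw [inv_eq_one_div, div_le_div_iff₀ hh hq0]
      have hqa : (q:ℝ) * α < h := (lt_div_iff₀ hα0).1 hq2
      nlinarith
    calc a * ((∫⁻ t in Set.Ioc (x - h) x, ENNReal.ofReal |g t|) / ENNReal.ofReal h)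
        = (∫⁻ t in Set.Ioc (x - h) x, ENNReal.ofReal |g t|) * (a / ENNReal.ofReal h) := by
          rw [div_eq_mul_inv, div_eq_mul_inv]; ring
      _ ≤ (∫⁻ t in Set.Ioc (x - q) x, ENNReal.ofReal |g t|) * (ENNReal.ofReal (q:ℝ))⁻¹ := by
          rw [haeq]; exact mul_le_mul' hmono hfrac
      _ = (∫⁻ t in Set.Ioc (x - q) x, ENNReal.ofReal |g t|) / ENNReal.ofReal (q:ℝ) := by
          rw [div_eq_mul_inv]
      _ ≤ _ := le_iSup₂ (f := fun (q : ℚ) (_ : 0 < (q:ℝ)) =>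
            (∫⁻ t in Set.Ioc (x - q) x, ENNReal.ofReal |g t|) / ENNReal.ofReal q) q hq0
  · exact iSup₂_le fun q hq => term_le_Mminus g x hq

lemma measurable_Mminus (g : ℝ → ℝ) (hg : (∫⁻ t, ENNReal.ofReal |g t|) ≠ ⊤) :
    Measurable (Mminus g) := by
  set F : ℝ → ℝ≥0∞ := fun x => ∫⁻ t in Set.Iic x, ENNReal.ofReal |g t| with hF
  have hFmono : Monotone F := fun a b hab => lintegral_mono_set (Set.Iic_subset_Iic.2 hab)
  have hFmeas : Measurable F := hFmono.measurable
  have hFt : ∀ x, F x ≠ ⊤ := fun x => ne_top_of_le_ne_top hg (setLIntegral_le_lintegral _ _)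
  have hsplit : ∀ (x : ℝ) (q : ℚ), 0 < (q:ℝ) →
      (∫⁻ t in Set.Ioc (x - q) x, ENNReal.ofReal |g t|) = F x - F (x - q) := by
    intro x q hq
    have hsub : (x:ℝ) - q ≤ x := by linarith
    have h2 : F x = F (x - q) + ∫⁻ t in Set.Ioc (x - q) x, ENNReal.ofReal |g t| := by
      rw [hF]
      simp only
      rw [← Set.Iic_union_Ioc_eq_Iic hsub,
        lintegral_union measurableSet_Ioc (Set.Iic_disjoint_Ioc le_rfl)]
    rw [h2, ENNReal.add_sub_cancel_left (hFt _)]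
  have heq : Mminus g = fun x => ⨆ (q : ℚ) (_ : 0 < (q:ℝ)),
      (F x - F (x - q)) / ENNReal.ofReal q := by
    funext x; rw [Mminus_eq_rat_sup]
    refine iSup_congr fun q => iSup_congr fun hq => ?_
    rw [hsplit x q hq]
  rw [heq]
  refine Measurable.iSup fun q => ?_
  by_cases hq : 0 < (q:ℝ)
  · simp only [hq, iSup_pos]
    exact (hFmeas.sub (hFmeas.comp (measurable_id.sub measurable_const))).div_const _
  · simp only [hq, not_false_iff, iSup_neg]
    exact measurable_const

lemma kolmogorov {δ : ℝ} (hδ0 : 0 < δ) (hδ1 : δ < 1) (u : ℝ → ℝ≥0∞) (hu : Measurable u)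
    {I : Set ℝ} (hI : MeasurableSet I) (H lam : ℝ≥0∞) (hlam0 : lam ≠ 0) (hlamt : lam ≠ ⊤)
    (hIH : volume I ≤ H) (hHt : H ≠ ⊤)
    (hw : ∀ k : ℕ, volume (I ∩ {t | lam * 2 ^ k < u t}) ≤ H / 2 ^ k) :
    ∫⁻ t in I, (u t) ^ δ ≤ lam ^ δ * H * ENNReal.ofReal (5 / (1 - δ)) := by
  have h1δ : (0:ℝ) < 1 - δ := by linarith
  set A := I ∩ {t | u t ≤ lam} with hA
  set B : ℕ → Set ℝ := fun k => I ∩ {t | lam * 2 ^ k < u t ∧ u t ≤ lam * 2 ^ (k + 1)} with hB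
  set C := I ∩ {t | u t = ⊤} with hC
  have hcov : I ⊆ A ∪ (C ∪ ⋃ k, B k) := by
    intro t ht
    by_cases h1 : u t ≤ lam
    · exact Or.inl ⟨ht, h1⟩
    push_neg at h1
    by_cases h2 : u t = ⊤
    · exact Or.inr (Or.inl ⟨ht, h2⟩)
    refine Or.inr (Or.inr ?_)
    have hex : ∃ n : ℕ, u t ≤ lam * 2 ^ (n + 1) := by
      obtain ⟨n, hn⟩ := ENNReal.exists_nat_gt ((ENNReal.div_lt_top h2 hlam0).ne)
      refine ⟨n, ?_⟩
      have hcast : ((2 ^ (n+1) : ℕ) : ℝ≥0∞) = 2 ^ (n+1) := by push_cast; ring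
      have h3 : u t / lam < 2 ^ (n + 1) := by
        refine hn.trans_le ?_
        rw [← hcast]
        exact_mod_cast Nat.le_of_lt ((Nat.lt_two_pow_self (n := n)).trans
          (Nat.pow_lt_pow_right one_lt_two (Nat.lt_succ_self n)))
      rw [ENNReal.div_lt_iff (Or.inl hlam0) (Or.inl hlamt)] at h3
      exact (mul_comm _ lam ▸ h3.le)
    set k := Nat.find hex with hk
    refine Set.mem_iUnion.2 ⟨k, ht, ?_, Nat.find_spec hex⟩
    rcases Nat.eq_zero_or_pos k with h0 | hpos
    · rw [h0]; simpa using h1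
    · have := Nat.find_min hex (Nat.sub_lt hpos one_pos)
      push_neg at this
      have hks : k - 1 + 1 = k := Nat.succ_pred_eq_of_pos hpos
      rwa [hks] at this
  have hvolC : volume C = 0 := by
    by_contra h0
    have hCk : ∀ k : ℕ, volume C ≤ H / 2 ^ k := by
      intro k
      refine (measure_mono ?_).trans (hw k)
      rintro t ⟨ht, htop⟩
      refine ⟨ht, ?_⟩
      rw [Set.mem_setOf_eq, htop]
      exact ENNReal.mul_lt_top hlamt.lt_top (ENNReal.pow_lt_top (n := k) (by norm_num))
    obtain ⟨n, hn⟩ := ENNReal.exists_nat_gt ((ENNReal.div_lt_top hHt h0).ne)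
    have hcast : ((2 ^ n : ℕ) : ℝ≥0∞) = 2 ^ n := by push_cast; ring
    have h2n : H / volume C < 2 ^ n := by
      refine hn.trans_le ?_
      rw [← hcast]
      exact_mod_cast Nat.le_of_lt (Nat.lt_two_pow_self (n := n))
    rw [ENNReal.div_lt_iff (Or.inl h0) (Or.inr hHt)] at h2n
    have hle := (ENNReal.le_div_iff_mul_le (Or.inl (by positivity)) (Or.inl (by simp))).1 (hCk n)
    rw [mul_comm] at h2n
    exact absurd hle (not_le.2 h2n)
  have hCint : ∫⁻ t in C, (u t) ^ δ = 0 := setLIntegral_measure_zero _ _ hvolC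
  have hAint : ∫⁻ t in A, (u t) ^ δ ≤ lam ^ δ * H := by
    have hAm : MeasurableSet A := hI.inter (hu measurableSet_Iic)
    calc ∫⁻ t in A, (u t) ^ δ ≤ ∫⁻ _ in A, lam ^ δ := by
          refine lintegral_mono_ae ?_
          filter_upwards [ae_restrict_mem hAm] with t ht
          exact ENNReal.rpow_le_rpow ht.2 hδ0.le
      _ = lam ^ δ * volume A := setLIntegral_const _ _
      _ ≤ lam ^ δ * H := by
          gcongr
          exact (measure_mono Set.inter_subset_left).trans hIH
  have hBint : ∀ k, ∫⁻ t in B k, (u t) ^ δ ≤ (lam * 2 ^ (k+1)) ^ δ * (H / 2 ^ k) := by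
    intro k
    have hBm : MeasurableSet (B k) :=
      hI.inter ((hu measurableSet_Ioi).inter (hu measurableSet_Iic))
    calc ∫⁻ t in B k, (u t) ^ δ ≤ ∫⁻ _ in B k, (lam * 2 ^ (k+1)) ^ δ := by
          refine lintegral_mono_ae ?_
          filter_upwards [ae_restrict_mem hBm] with t ht
          exact ENNReal.rpow_le_rpow ht.2.2 hδ0.le
      _ = (lam * 2 ^ (k+1)) ^ δ * volume (B k) := setLIntegral_const _ _
      _ ≤ (lam * 2 ^ (k+1)) ^ δ * (H / 2 ^ k) := by
          gcongr
          refine (measure_mono ?_).trans (hw k)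
          exact fun t ht => ⟨ht.1, ht.2.1⟩
  set r : ℝ≥0∞ := 2 ^ (δ - 1) with hr
  have hterm : ∀ k : ℕ, (lam * 2 ^ (k+1)) ^ δ * (H / 2 ^ k)
      = lam ^ δ * H * ((2:ℝ≥0∞) ^ δ * r ^ k) := by
    intro k
    have h1 : ((2:ℝ≥0∞) ^ (k+1)) ^ δ = (2:ℝ≥0∞) ^ (((k:ℝ) + 1) * δ) := by
      rw [← ENNReal.rpow_natCast 2 (k+1), ← ENNReal.rpow_mul]
      push_cast
      ring_nf
    have h2 : ((2:ℝ≥0∞) ^ k)⁻¹ = (2:ℝ≥0∞) ^ (-(k:ℝ)) := by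
      rw [← ENNReal.rpow_natCast 2 k, ← ENNReal.rpow_neg]
    have h3 : r ^ k = (2:ℝ≥0∞) ^ ((δ - 1) * (k:ℝ)) := by
      rw [hr, ENNReal.rpow_mul, ENNReal.rpow_natCast]
    have hpow : ((2:ℝ≥0∞) ^ (k+1)) ^ δ * ((2:ℝ≥0∞) ^ k)⁻¹ = (2:ℝ≥0∞) ^ δ * r ^ k := by
      rw [h1, h2, h3,
        ← ENNReal.rpow_add _ _ (by norm_num) (by norm_num),
        ← ENNReal.rpow_add _ _ (by norm_num) (by norm_num)]
      congr 1
      ring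
    calc (lam * 2 ^ (k+1)) ^ δ * (H / 2 ^ k)
        = lam ^ δ * (((2:ℝ≥0∞) ^ (k+1)) ^ δ * ((2:ℝ≥0∞) ^ k)⁻¹) * H := by
          rw [ENNReal.mul_rpow_of_nonneg _ _ hδ0.le, ENNReal.div_eq_inv_mul]
          ring
      _ = lam ^ δ * ((2:ℝ≥0∞) ^ δ * r ^ k) * H := by rw [hpow]
      _ = lam ^ δ * H * ((2:ℝ≥0∞) ^ δ * r ^ k) := by ring
  have hgeom : ∑' k : ℕ, r ^ k = (1 - r)⁻¹ := ENNReal.tsum_geometric r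
  have hinv : (1 - r)⁻¹ ≤ ENNReal.ofReal (2 / (1 - δ)) := by
    have hrof : r = ENNReal.ofReal ((2:ℝ) ^ (δ - 1)) := by
      rw [hr, ← ENNReal.ofReal_rpow_of_pos two_pos, ENNReal.ofReal_ofNat]
    have hreal : (2:ℝ) ^ (δ - 1) ≤ 1 - (1 - δ) / 2 := by
      have hgm := Real.geom_mean_le_arith_mean2_weighted
        (by linarith : (0:ℝ) ≤ 1 - δ) hδ0.le (by norm_num : (0:ℝ) ≤ 2⁻¹)
        (by norm_num : (0:ℝ) ≤ 1) (by ring)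
      calc (2:ℝ) ^ (δ - 1) = (2:ℝ) ^ (-(1 - δ)) := by ring_nf
        _ = ((2:ℝ) ^ (1 - δ))⁻¹ := Real.rpow_neg (by norm_num) _
        _ = (2⁻¹:ℝ) ^ (1 - δ) := (Real.inv_rpow (by norm_num) _).symm
        _ = (2⁻¹:ℝ) ^ (1 - δ) * (1:ℝ) ^ δ := by rw [Real.one_rpow]; ring
        _ ≤ (1 - δ) * 2⁻¹ + δ * 1 := hgm
        _ = 1 - (1 - δ) / 2 := by ring
    have h1r : ENNReal.ofReal ((1 - δ)/2) ≤ 1 - r := by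
      rw [hrof]
      calc ENNReal.ofReal ((1 - δ)/2) = 1 - ENNReal.ofReal (1 - (1-δ)/2) := by
            rw [← ENNReal.ofReal_one,
              ← ENNReal.ofReal_sub _ (by linarith : (0:ℝ) ≤ 1 - (1-δ)/2)]
            congr 1
            ring
        _ ≤ 1 - ENNReal.ofReal ((2:ℝ) ^ (δ - 1)) := by
            gcongr
    calc (1 - r)⁻¹ ≤ (ENNReal.ofReal ((1 - δ)/2))⁻¹ := ENNReal.inv_le_inv' h1r
      _ = ENNReal.ofReal (((1 - δ)/2)⁻¹) := (ENNReal.ofReal_inv_of_pos (by linarith)).symm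
      _ = ENNReal.ofReal (2 / (1 - δ)) := by rw [inv_div]
  calc ∫⁻ t in I, (u t) ^ δ ≤ ∫⁻ t in A ∪ (C ∪ ⋃ k, B k), (u t) ^ δ :=
        lintegral_mono_set hcov
    _ ≤ (∫⁻ t in A, (u t) ^ δ) + ∫⁻ t in C ∪ ⋃ k, B k, (u t) ^ δ := lintegral_union_le _ _ _
    _ ≤ (∫⁻ t in A, (u t) ^ δ) + ((∫⁻ t in C, (u t) ^ δ) + ∫⁻ t in ⋃ k, B k, (u t) ^ δ) :=
        add_le_add le_rfl (lintegral_union_le _ _ _)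
    _ ≤ lam ^ δ * H + (0 + ∑' k, ∫⁻ t in B k, (u t) ^ δ) :=
        add_le_add hAint (add_le_add hCint.le (lintegral_iUnion_le _ _))
    _ ≤ lam ^ δ * H + ∑' k, (lam * 2 ^ (k+1)) ^ δ * (H / 2 ^ k) := by
        rw [zero_add]
        exact add_le_add le_rfl (ENNReal.tsum_le_tsum hBint)
    _ = lam ^ δ * H + lam ^ δ * H * ((2:ℝ≥0∞) ^ δ * (1 - r)⁻¹) := by
        congr 1
        rw [← hgeom]
        calc ∑' k, (lam * 2 ^ (k+1)) ^ δ * (H / 2 ^ k)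
            = ∑' k, lam ^ δ * H * ((2:ℝ≥0∞) ^ δ * r ^ k) := tsum_congr hterm
          _ = lam ^ δ * H * ((2:ℝ≥0∞) ^ δ * ∑' k, r ^ k) := by
              rw [← ENNReal.tsum_mul_left, ← ENNReal.tsum_mul_left]
    _ ≤ lam ^ δ * H * ENNReal.ofReal (5 / (1 - δ)) := by
        rw [show lam ^ δ * H + lam ^ δ * H * ((2:ℝ≥0∞) ^ δ * (1 - r)⁻¹)
            = lam ^ δ * H * (1 + (2:ℝ≥0∞) ^ δ * (1 - r)⁻¹) by ring]
        gcongr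
        have h2δ : (2:ℝ≥0∞) ^ δ ≤ 2 := by
          calc (2:ℝ≥0∞) ^ δ ≤ (2:ℝ≥0∞) ^ (1:ℝ) :=
              ENNReal.rpow_le_rpow_of_exponent_le (by norm_num) hδ1.le
            _ = 2 := ENNReal.rpow_one 2
        calc 1 + (2:ℝ≥0∞) ^ δ * (1 - r)⁻¹ ≤ 1 + 2 * ENNReal.ofReal (2 / (1 - δ)) := by
              gcongr
          _ = ENNReal.ofReal (1 + 2 * (2 / (1 - δ))) := by
              rw [ENNReal.ofReal_add (by norm_num)
                  (mul_nonneg (by norm_num) (div_nonneg (by norm_num) h1δ.le)),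
                ENNReal.ofReal_mul (by norm_num), ENNReal.ofReal_ofNat,
                ENNReal.ofReal_one]
          _ ≤ ENNReal.ofReal (5 / (1 - δ)) := by
              apply ENNReal.ofReal_le_ofReal
              rw [le_div_iff₀ h1δ]
              have hx : (1 + 2 * (2 / (1 - δ))) * (1 - δ) = (1 - δ) + 4 := by
                field_simp
                ring
              rw [hx]
              linarith

lemma main_est {δ : ℝ} (hδ0 : 0 < δ) (hδ1 : δ < 1) (f : ℝ → ℝ)
    (hf : LocallyIntegrable f volume) {x : ℝ} (hx : Mminus f x < ⊤) {h : ℝ} (hh : 0 < h) :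
    (∫⁻ t in Set.Ioc (x - h) x, (Mminus f t) ^ δ) / ENNReal.ofReal h
      ≤ ENNReal.ofReal (100 / (1 - δ)) * (Mminus f x) ^ δ := by
  have h1δ : (0:ℝ) < 1 - δ := by linarith
  set M := Mminus f x with hM
  have hIvol : volume (Set.Ioc (x - h) x) = ENNReal.ofReal h := by
    rw [Real.volume_Ioc]; congr 1; ring
  by_cases hM0 : M = 0
  · -- trivial case
    have hzero : ∀ t, t ≤ x → Mminus f t = 0 := by
      intro t ht
      refine le_antisymm (iSup₂_le fun s hs => ?_) zero_le
      have hs' : 0 < x - t + s := by linarith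
      have hsub : Set.Ioc (t - s) t ⊆ Set.Ioc (x - (x - t + s)) x := by
        intro y hy
        refine ⟨?_, hy.2.trans ht⟩
        have : x - (x - t + s) = t - s := by ring
        rw [this]; exact hy.1
      have hle := (lintegral_mono_set hsub).trans (setLintegral_le_Mminus_mul f x hs')
      rw [← hM, hM0, zero_mul, nonpos_iff_eq_zero] at hle
      rw [hle, ENNReal.zero_div]
    have : ∫⁻ t in Set.Ioc (x - h) x, (Mminus f t) ^ δ = 0 := by
      have hae : ∀ᵐ t ∂(volume.restrict (Set.Ioc (x - h) x)), (Mminus f t) ^ δ = 0 := by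
        filter_upwards [ae_restrict_mem measurableSet_Ioc] with t ht
        rw [hzero t ht.2, ENNReal.zero_rpow_of_pos hδ0]
      rw [lintegral_congr_ae hae, lintegral_zero]
    rw [this, ENNReal.zero_div]
    exact zero_le
  -- main case
  have hMt : M ≠ ⊤ := hx.ne
  set S := Set.Ioc (x - 2*h) x with hS
  set f₁ := S.indicator f with hf₁
  set f₂ := Sᶜ.indicator f with hf₂
  have habs : ∀ y, ENNReal.ofReal |f y| = ENNReal.ofReal |f₁ y| + ENNReal.ofReal |f₂ y| := by
    intro y
    by_cases hy : y ∈ S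
    · rw [hf₁, hf₂, Set.indicator_of_mem hy, Set.indicator_of_notMem (by simpa using hy)]
      simp
    · rw [hf₁, hf₂, Set.indicator_of_notMem hy, Set.indicator_of_mem (by simpa using hy)]
      simp
  have habs' : ∀ y, ENNReal.ofReal |f₁ y| ≤ ENNReal.ofReal |f y| := by
    intro y
    rw [habs y]; exact le_self_add
  have habs'' : ∀ y, ENNReal.ofReal |f₂ y| ≤ ENNReal.ofReal |f y| := by
    intro y
    rw [habs y]; exact le_add_self
  have hind : ∀ y, ENNReal.ofReal |f₁ y| = S.indicator (fun z => ENNReal.ofReal |f z|) y := by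
    intro y
    by_cases hy : y ∈ S
    · rw [hf₁, Set.indicator_of_mem hy, Set.indicator_of_mem hy]
    · rw [hf₁, Set.indicator_of_notMem hy, Set.indicator_of_notMem hy]
      simp
  have hN : (∫⁻ t, ENNReal.ofReal |f₁ t|) ≤ M * ENNReal.ofReal (2*h) := by
    calc (∫⁻ t, ENNReal.ofReal |f₁ t|)
        = ∫⁻ t, S.indicator (fun z => ENNReal.ofReal |f z|) t := lintegral_congr hind
      _ = ∫⁻ t in S, ENNReal.ofReal |f t| := lintegral_indicator measurableSet_Ioc _
      _ ≤ M * ENNReal.ofReal (2*h) := setLintegral_le_Mminus_mul f x (by linarith)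
  have hNt : (∫⁻ t, ENNReal.ofReal |f₁ t|) ≠ ⊤ :=
    ne_top_of_le_ne_top (ENNReal.mul_ne_top hMt ENNReal.ofReal_ne_top) hN
  have hu : Measurable (Mminus f₁) := measurable_Mminus f₁ hNt
  have hfm : AEMeasurable (fun y => ENNReal.ofReal |f₁ y|) volume := by
    have hfa : AEMeasurable f volume := hf.aestronglyMeasurable.aemeasurable
    exact ENNReal.measurable_ofReal.comp_aemeasurable
      (continuous_abs.measurable.comp_aemeasurable (hfa.indicator measurableSet_Ioc))
  have hsub : ∀ t, Mminus f t ≤ Mminus f₁ t + Mminus f₂ t := by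
    intro t
    refine iSup₂_le fun s hs => ?_
    have hintegral : (∫⁻ y in Set.Ioc (t - s) t, ENNReal.ofReal |f y|)
        = (∫⁻ y in Set.Ioc (t - s) t, ENNReal.ofReal |f₁ y|)
          + ∫⁻ y in Set.Ioc (t - s) t, ENNReal.ofReal |f₂ y| := by
      rw [← lintegral_add_left' hfm.restrict]
      exact lintegral_congr fun y => habs y
    rw [hintegral, ENNReal.add_div]
    exact add_le_add (term_le_Mminus f₁ t hs) (term_le_Mminus f₂ t hs)
  have hf2 : ∀ t ∈ Set.Ioc (x - h) x, Mminus f₂ t ≤ 2 * M := by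
    rintro t ⟨ht1, ht2⟩
    refine iSup₂_le fun s hs => ?_
    rcases le_or_gt s h with hsh | hsh
    · have hss : Set.Ioc (t - s) t ⊆ S := by
        rw [hS]
        intro y hy
        exact ⟨by linarith [hy.1], hy.2.trans ht2⟩
      have hvanish : ∫⁻ y in Set.Ioc (t - s) t, ENNReal.ofReal |f₂ y| = 0 := by
        have hae : ∀ᵐ y ∂(volume.restrict (Set.Ioc (t - s) t)),
            ENNReal.ofReal |f₂ y| = 0 := by
          filter_upwards [ae_restrict_mem measurableSet_Ioc] with y hy
          have hyS : y ∈ S := hss hy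
          rw [hf₂, Set.indicator_of_notMem (by simpa using hyS)]
          simp
        rw [lintegral_congr_ae hae, lintegral_zero]
      rw [hvanish, ENNReal.zero_div]
      exact zero_le
    · set s' := x - t + s with hs'
      have hs'pos : 0 < s' := by simp only [hs']; linarith
      have hsub2 : Set.Ioc (t - s) t ⊆ Set.Ioc (x - s') x := by
        intro y hy
        refine ⟨?_, hy.2.trans ht2⟩
        have : x - s' = t - s := by simp only [hs']; ring
        rw [this]; exact hy.1
      have hb : (∫⁻ y in Set.Ioc (t - s) t, ENNReal.ofReal |f₂ y|)
          ≤ M * ENNReal.ofReal s' := by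
        calc (∫⁻ y in Set.Ioc (t - s) t, ENNReal.ofReal |f₂ y|)
            ≤ ∫⁻ y in Set.Ioc (t - s) t, ENNReal.ofReal |f y| :=
              lintegral_mono fun y => habs'' y
          _ ≤ ∫⁻ y in Set.Ioc (x - s') x, ENNReal.ofReal |f y| := lintegral_mono_set hsub2
          _ ≤ M * ENNReal.ofReal s' := setLintegral_le_Mminus_mul f x hs'pos
      rw [ENNReal.div_le_iff (by simp [hs, hs.not_ge]) (by simp)]
      calc (∫⁻ y in Set.Ioc (t - s) t, ENNReal.ofReal |f₂ y|)
          ≤ M * ENNReal.ofReal s' := hb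
        _ ≤ M * (2 * ENNReal.ofReal s) := by
            gcongr
            calc ENNReal.ofReal s' ≤ ENNReal.ofReal (2*s) :=
                ENNReal.ofReal_le_ofReal (by simp only [hs']; linarith)
              _ = 2 * ENNReal.ofReal s := by
                rw [ENNReal.ofReal_mul (by norm_num), ENNReal.ofReal_ofNat]
        _ = 2 * M * ENNReal.ofReal s := by ring
  have hpw : ∀ t ∈ Set.Ioc (x - h) x,
      (Mminus f t) ^ δ ≤ (Mminus f₁ t) ^ δ + (2*M) ^ δ := by
    intro t ht
    calc (Mminus f t) ^ δ ≤ (Mminus f₁ t + 2*M) ^ δ :=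
        ENNReal.rpow_le_rpow ((hsub t).trans (add_le_add le_rfl (hf2 t ht))) hδ0.le
      _ ≤ (Mminus f₁ t) ^ δ + (2*M) ^ δ :=
        ENNReal.rpow_add_le_add_rpow _ _ hδ0.le hδ1.le
  -- weak-type hypothesis for kolmogorov
  have h16M0 : (16 : ℝ≥0∞) * M ≠ 0 := by
    simp [hM0]
  have h16Mt : (16 : ℝ≥0∞) * M ≠ ⊤ := ENNReal.mul_ne_top (by simp) hMt
  have hkw : ∀ k : ℕ, volume (Set.Ioc (x - h) x ∩ {t | (16 * M) * 2 ^ k < Mminus f₁ t})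
      ≤ ENNReal.ofReal h / 2 ^ k := by
    intro k
    have hl0 : (16 * M) * 2 ^ k ≠ 0 := by
      simp [hM0]
    have hwk := weak_type f₁ ((16 * M) * 2 ^ k) hl0
    have h8 : 8 * (∫⁻ t, ENNReal.ofReal |f₁ t|) ≤ 16 * M * ENNReal.ofReal h := by
      calc 8 * (∫⁻ t, ENNReal.ofReal |f₁ t|) ≤ 8 * (M * ENNReal.ofReal (2*h)) := by gcongr
        _ = 16 * M * ENNReal.ofReal h := by
            rw [ENNReal.ofReal_mul (by norm_num : (0:ℝ) ≤ 2), ENNReal.ofReal_ofNat]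
            ring
    have h1 : (16*M) * (2 ^ k * volume (Set.Ioc (x - h) x ∩ {t | (16 * M) * 2 ^ k < Mminus f₁ t}))
        ≤ (16*M) * ENNReal.ofReal h := by
      calc (16*M) * (2 ^ k * volume (Set.Ioc (x - h) x ∩ {t | (16 * M) * 2 ^ k < Mminus f₁ t}))
          = ((16*M) * 2 ^ k) * volume (Set.Ioc (x - h) x ∩ {t | (16 * M) * 2 ^ k < Mminus f₁ t}) := by
            ring
        _ ≤ ((16*M) * 2 ^ k) * volume {t | (16 * M) * 2 ^ k < Mminus f₁ t} := by
            gcongr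
            exact Set.inter_subset_right
        _ ≤ 8 * (∫⁻ t, ENNReal.ofReal |f₁ t|) := hwk
        _ ≤ (16*M) * ENNReal.ofReal h := h8
    have h2 := (ENNReal.mul_le_mul_iff_right h16M0 h16Mt).1 h1
    rw [ENNReal.le_div_iff_mul_le (Or.inl (by positivity)) (Or.inl (by simp))]
    rwa [mul_comm]
  have hkolm := kolmogorov hδ0 hδ1 (Mminus f₁) hu measurableSet_Ioc
    (ENNReal.ofReal h) (16*M) h16M0 h16Mt hIvol.le ENNReal.ofReal_ne_top hkw
  -- totals
  have h16 : ((16:ℝ≥0∞) * M) ^ δ ≤ 16 * M ^ δ := by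
    rw [ENNReal.mul_rpow_of_nonneg _ _ hδ0.le]
    gcongr
    calc (16:ℝ≥0∞) ^ δ ≤ (16:ℝ≥0∞) ^ (1:ℝ) :=
        ENNReal.rpow_le_rpow_of_exponent_le (by norm_num) hδ1.le
      _ = 16 := ENNReal.rpow_one _
  have h2M : ((2:ℝ≥0∞) * M) ^ δ ≤ 2 * M ^ δ := by
    rw [ENNReal.mul_rpow_of_nonneg _ _ hδ0.le]
    gcongr
    calc (2:ℝ≥0∞) ^ δ ≤ (2:ℝ≥0∞) ^ (1:ℝ) :=
        ENNReal.rpow_le_rpow_of_exponent_le (by norm_num) hδ1.le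
      _ = 2 := ENNReal.rpow_one _
  have htot : (∫⁻ t in Set.Ioc (x - h) x, (Mminus f t) ^ δ)
      ≤ (ENNReal.ofReal (100 / (1 - δ)) * M ^ δ) * ENNReal.ofReal h := by
    calc (∫⁻ t in Set.Ioc (x - h) x, (Mminus f t) ^ δ)
        ≤ ∫⁻ t in Set.Ioc (x - h) x, ((Mminus f₁ t) ^ δ + (2*M) ^ δ) := by
          refine lintegral_mono_ae ?_
          filter_upwards [ae_restrict_mem measurableSet_Ioc] with t ht
          exact hpw t ht
      _ = (∫⁻ t in Set.Ioc (x - h) x, (Mminus f₁ t) ^ δ) + (2*M) ^ δ * ENNReal.ofReal h := by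
          rw [lintegral_add_right _ measurable_const, setLIntegral_const, hIvol]
      _ ≤ (16*M) ^ δ * ENNReal.ofReal h * ENNReal.ofReal (5 / (1 - δ))
            + (2*M) ^ δ * ENNReal.ofReal h := add_le_add hkolm le_rfl
      _ ≤ (16 * M ^ δ) * ENNReal.ofReal h * ENNReal.ofReal (5 / (1 - δ))
            + (2 * M ^ δ) * ENNReal.ofReal h := by gcongr
      _ = M ^ δ * ENNReal.ofReal h * (16 * ENNReal.ofReal (5 / (1 - δ)) + 2) := by ring
      _ ≤ M ^ δ * ENNReal.ofReal h * ENNReal.ofReal (100 / (1 - δ)) := by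
          gcongr
          calc (16:ℝ≥0∞) * ENNReal.ofReal (5 / (1 - δ)) + 2
              = ENNReal.ofReal (16 * (5 / (1 - δ)) + 2) := by
                rw [ENNReal.ofReal_add (mul_nonneg (by norm_num)
                    (div_nonneg (by norm_num) h1δ.le)) (by norm_num),
                  ENNReal.ofReal_mul (by norm_num), ENNReal.ofReal_ofNat,
                  ENNReal.ofReal_ofNat]
            _ ≤ ENNReal.ofReal (100 / (1 - δ)) := by
                apply ENNReal.ofReal_le_ofReal
                rw [le_div_iff₀ h1δ]
                have hexp : (16 * (5 / (1 - δ)) + 2) * (1 - δ) = 80 + 2 * (1 - δ) := by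
                  field_simp
                  ring
                rw [hexp]
                linarith
      _ = (ENNReal.ofReal (100 / (1 - δ)) * M ^ δ) * ENNReal.ofReal h := by ring
  rw [ENNReal.div_le_iff (by simp [hh, hh.not_ge]) (by simp)]
  exact htot


end CRhelpers

/-- for `0 < δ < 1`, `(M⁻f)^δ ∈ A₁⁺` with constant at most `C/(1-δ)`
for an absolute constant `C`. -/
theorem stmt0 :
    ∃ C : ℝ, 0 < C ∧
      ∀ δ : ℝ, 0 < δ → δ < 1 →
        ∀ f : ℝ → ℝ, LocallyIntegrable f volume → (∀ᵐ x : ℝ, Mminus f x < ⊤) →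
          A1PlusWith (fun x => (Mminus f x).toReal ^ δ) (C / (1 - δ)) := by
  refine ⟨100, by norm_num, fun δ hδ0 hδ1 f hf hfin => ?_⟩
  have h1δ : (0:ℝ) < 1 - δ := by linarith
  show ∀ᵐ x : ℝ, _ ≤ _
  filter_upwards [hfin] with x hx
  have hc : (0:ℝ) ≤ 100 / (1 - δ) := div_nonneg (by norm_num) h1δ.le
  have hMδt : (Mminus f x) ^ δ ≠ ⊤ := (ENNReal.rpow_lt_top_of_nonneg hδ0.le hx.ne).ne
  have hrhs : ENNReal.ofReal ((100 / (1 - δ)) * ((Mminus f x).toReal ^ δ))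
      = ENNReal.ofReal (100 / (1 - δ)) * (Mminus f x) ^ δ := by
    rw [ENNReal.ofReal_mul hc, ENNReal.toReal_rpow, ENNReal.ofReal_toReal hMδt]
  rw [hrhs]
  refine iSup₂_le fun h hh => ?_
  calc (∫⁻ t in Set.Ioc (x - h) x, ENNReal.ofReal |(Mminus f t).toReal ^ δ|)
          / ENNReal.ofReal h
      ≤ (∫⁻ t in Set.Ioc (x - h) x, (Mminus f t) ^ δ) / ENNReal.ofReal h := by
        gcongr with t
        rw [abs_of_nonneg (Real.rpow_nonneg ENNReal.toReal_nonneg δ),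
          ENNReal.toReal_rpow]
        exact ENNReal.ofReal_toReal_le
    _ ≤ ENNReal.ofReal (100 / (1 - δ)) * (Mminus f x) ^ δ := main_est hδ0 hδ1 f hf hx hh


end
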